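/- Let X ∈ ℝ^{d_in×n}, W ∈ ℝ^{d_out×d_in}, and r ∈ ℕ. Then the infimum over matrices W̃ ∈ ℝ^{d_out×d_in} with rank(W̃) ≤ r of ‖WX − W̃X‖_F equals the infimum over matrices M ∈ ℝ^{d_out×n} with rank(M) ≤ r of ‖WX − M‖_F. -/

import Mathlib

open scoped BigOperators

namespace CoLA

noncomputable section

/-- Frobenius norm of a real matrix. -/
def frobNorm {m n : ℕ} (M : Matrix (Fin m) (Fin n) ℝ) : ℝ :=
  Real.sqrt (∑ i, ∑ j, (M i j) ^ 2)

/-- Entrywise application of `σ` to a matrix. -/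
def entrywise (σ : ℝ → ℝ) {m n : ℕ} (M : Matrix (Fin m) (Fin n) ℝ) :
    Matrix (Fin m) (Fin n) ℝ :=
  Matrix.of fun i j => σ (M i j)

/-- `E_σ(r)`. -/
def Esig (σ : ℝ → ℝ) {din dout n : ℕ} (X : Matrix (Fin din) (Fin n) ℝ)
    (Y : Matrix (Fin dout) (Fin n) ℝ) (r : ℕ) : ℝ :=
  ⨅ (A : Matrix (Fin r) (Fin din) ℝ), ⨅ (B : Matrix (Fin dout) (Fin r) ℝ),
    frobNorm (Y - B * entrywise σ (A * X))

/-- `E_id(r)`. -/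
def Eid {din dout n : ℕ} (X : Matrix (Fin din) (Fin n) ℝ)
    (Y : Matrix (Fin dout) (Fin n) ℝ) (r : ℕ) : ℝ :=
  ⨅ (A : Matrix (Fin r) (Fin din) ℝ), ⨅ (B : Matrix (Fin dout) (Fin r) ℝ),
    frobNorm (Y - B * A * X)

/-- The (unsorted) singular values of `M`: square roots of eigenvalues of `Mᴴ * M`. -/
def svAux {m n : ℕ} (M : Matrix (Fin m) (Fin n) ℝ) : Fin n → ℝ :=
  fun i => Real.sqrt ((show (Matrix.transpose M * M).IsHermitian by
    have h := Matrix.isHermitian_conjTranspose_mul_self M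
    rwa [Matrix.conjTranspose_eq_transpose_of_trivial] at h).eigenvalues i)

/-- Singular values of `M` sorted in non-increasing order (0-indexed). -/
def sv {m n : ℕ} (M : Matrix (Fin m) (Fin n) ℝ) : Fin n → ℝ :=
  fun i => svAux M (Tuple.sort (fun j => -(svAux M j)) i)

/-- `k`-th largest singular value (1-indexed, `0` for `k > n`). -/
def sVal {m n : ℕ} (M : Matrix (Fin m) (Fin n) ℝ) (k : ℕ) : ℝ :=
  if h : k - 1 < n then sv M ⟨k - 1, h⟩ else 0

/-- `s_{>k}(M) = √(∑_{j>k} s_j(M)²)` (with `j` 1-indexed). -/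
def sGt {m n : ℕ} (M : Matrix (Fin m) (Fin n) ℝ) (k : ℕ) : ℝ :=
  Real.sqrt (∑ j : Fin n, if k ≤ (j : ℕ) then (sv M j) ^ 2 else 0)

/-- Spectral (ℓ²-operator) norm of a real matrix. -/
def specNorm {m n : ℕ} (M : Matrix (Fin m) (Fin n) ℝ) : ℝ :=
  ‖LinearMap.toContinuousLinearMap (Matrix.toEuclideanLin M)‖

/-- Effective rank `r_α(M)`: the least `k` with `∑_{i≤k} s_i² ≥ α ∑_i s_i²`. -/
def effRank {m n : ℕ} (M : Matrix (Fin m) (Fin n) ℝ) (α : ℝ) : ℕ :=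
  sInf {k : ℕ |
    α * ∑ i : Fin n, (sv M i) ^ 2 ≤ ∑ i : Fin n, if (i : ℕ) < k then (sv M i) ^ 2 else 0}

/-- Row space of `X` inside `Fin n → ℝ`. -/
def rowSpace {d n : ℕ} (X : Matrix (Fin d) (Fin n) ℝ) : Submodule ℝ (Fin n → ℝ) :=
  Submodule.span ℝ (Set.range X)

/-- Row space of `X` as a submodule of Euclidean space. -/
def rowSpaceE {d n : ℕ} (X : Matrix (Fin d) (Fin n) ℝ) :
    Submodule ℝ (EuclideanSpace ℝ (Fin n)) :=
  Submodule.span ℝ (Set.range fun i => (WithLp.equiv 2 (Fin n → ℝ)).symm (X i))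

/-- Row-wise orthogonal projection of the rows of `Y` onto the subspace `S`. -/
def projRows {dout n : ℕ} (S : Submodule ℝ (EuclideanSpace ℝ (Fin n)))
    (Y : Matrix (Fin dout) (Fin n) ℝ) : Matrix (Fin dout) (Fin n) ℝ :=
  Matrix.of fun i => WithLp.equiv 2 (Fin n → ℝ)
    ((S.orthogonalProjectionOnto ((WithLp.equiv 2 (Fin n → ℝ)).symm (Y i)) :
      EuclideanSpace ℝ (Fin n)))

/-- Row-wise orthogonal projection onto the orthogonal complement of `span{v}`. -/
def projVperp {dout n : ℕ} (v : Fin n → ℝ) (Y : Matrix (Fin dout) (Fin n) ℝ) :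
    Matrix (Fin dout) (Fin n) ℝ :=
  projRows (Submodule.span ℝ {(WithLp.equiv 2 (Fin n → ℝ)).symm v})ᗮ Y


open Submodule Module Matrix in
private lemma frob_eq_rows {m n : ℕ} (Z : Matrix (Fin m) (Fin n) ℝ) :
    frobNorm Z = Real.sqrt (∑ i, ‖(WithLp.equiv 2 (Fin n → ℝ)).symm (Z i)‖ ^ 2) := by
  unfold frobNorm
  congr 1
  refine Finset.sum_congr rfl fun i _ => ?_
  rw [EuclideanSpace.norm_eq, Real.sq_sqrt (by positivity)]
  exact Finset.sum_congr rfl fun j _ => (sq_abs _).symm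

-- row of a product

open Submodule Module Matrix in
private lemma row_mul {m k n : ℕ} (P : Matrix (Fin m) (Fin k) ℝ) (Q : Matrix (Fin k) (Fin n) ℝ)
    (i : Fin m) : (P * Q) i = ∑ t, P i t • Q t := by
  ext j
  simp [Matrix.mul_apply, Finset.sum_apply]


open Submodule Module Matrix in
private lemma key {din dout n : ℕ} (X : Matrix (Fin din) (Fin n) ℝ)
    (W : Matrix (Fin dout) (Fin din) ℝ) (r : ℕ)
    (M : Matrix (Fin dout) (Fin n) ℝ) (hM : M.rank ≤ r) :
    ∃ Wt : Matrix (Fin dout) (Fin din) ℝ, Wt.rank ≤ r ∧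
      frobNorm (W * X - Wt * X) ≤ frobNorm (W * X - M) := by
  classical
  set E := EuclideanSpace ℝ (Fin n)
  let le : (Fin n → ℝ) ≃ₗ[ℝ] E := (WithLp.linearEquiv 2 ℝ (Fin n → ℝ)).symm
  let S : Submodule ℝ E := span ℝ (Set.range fun i => le (X i))
  let p : E →ₗ[ℝ] E := S.subtype ∘ₗ (orthogonalProjection S).toLinearMap
  -- p is norm-nonincreasing and identity on S
  have hpnorm : ∀ z : E, ‖p z‖ ≤ ‖z‖ := by
    intro z
    have h1 : ‖orthogonalProjection S z‖ ≤ ‖orthogonalProjection S‖ * ‖z‖ :=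
      (orthogonalProjection S).le_opNorm z
    have h2 := Submodule.orthogonalProjectionOnto_norm_le S
    calc ‖p z‖ = ‖orthogonalProjection S z‖ := rfl
    _ ≤ ‖orthogonalProjection S‖ * ‖z‖ := h1
    _ ≤ 1 * ‖z‖ := by nlinarith [norm_nonneg z]
    _ = ‖z‖ := one_mul _
  have hpid : ∀ z ∈ S, p z = z := fun z hz => by
    have := (Submodule.starProjection_eq_self_iff (K := S)).2 hz; exact this
  have hpmem : ∀ z : E, p z ∈ S := fun z => (orthogonalProjection S z).2
  -- rows of W*X lie in S
  have hWX : ∀ i, le ((W * X) i) ∈ S := by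
    intro i
    rw [row_mul, map_sum]
    exact sum_mem fun k _ => by
      rw [_root_.map_smul]; exact smul_mem _ _ (subset_span (Set.mem_range_self k))
  -- the projected matrix
  let N : Matrix (Fin dout) (Fin n) ℝ := Matrix.of fun i => le.symm (p (le (M i)))
  -- span of rows of N has finrank ≤ r
  let T : Submodule ℝ E := span ℝ (Set.range fun i => p (le (M i)))
  have hT : finrank ℝ T ≤ r := by
    have h1 : T = Submodule.map p (Submodule.map (le : (Fin n → ℝ) →ₗ[ℝ] E)
        (span ℝ (Set.range fun i => M i))) := by
      rw [Submodule.map_span, Submodule.map_span, ← Set.range_comp, ← Set.range_comp]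
      rfl
    have h2 : finrank ℝ (Submodule.map (le : (Fin n → ℝ) →ₗ[ℝ] E)
        (span ℝ (Set.range fun i => M i))) = finrank ℝ (span ℝ (Set.range fun i => M i)) :=
      LinearEquiv.finrank_map_eq le _
    have h3 : finrank ℝ (span ℝ (Set.range fun i => M i)) = Mᵀ.rank := by
      rw [Matrix.rank_eq_finrank_span_cols (A := Mᵀ)]; rfl
    rw [h1]
    calc finrank ℝ (Submodule.map p _) ≤ _ := Submodule.finrank_map_le p _
    _ ≤ r := by rw [h2, h3, Matrix.rank_transpose]; exact hM
  -- choose a spanning family of size r for T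
  set d := finrank ℝ T with hd
  let b := finBasis ℝ T
  let c : Fin r → E := fun k => if h : (k : ℕ) < d then (b ⟨k, h⟩ : E) else 0
  have hTS : T ≤ S := by
    rw [span_le]
    rintro _ ⟨i, rfl⟩
    exact hpmem _
  have hcS : ∀ k, c k ∈ S := by
    intro k
    by_cases h : (k : ℕ) < d
    · simpa [c, h] using hTS (b ⟨k, h⟩).2
    · simp [c, h]
  have hTc : T ≤ span ℝ (Set.range c) := by
    have hspan : span ℝ (Set.range fun i : Fin d => (b i : E)) = T := by
      have h0 := congrArg (Submodule.map T.subtype) b.span_eq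
      rw [Submodule.map_span, Submodule.map_top, Submodule.range_subtype,
        ← Set.range_comp] at h0
      exact h0
    rw [← hspan]
    apply span_mono
    rintro _ ⟨i, rfl⟩
    refine ⟨⟨(i : ℕ), i.2.trans_le hT⟩, ?_⟩
    simp [c, i.2]
  have hrowT : ∀ i, p (le (M i)) ∈ span ℝ (Set.range c) :=
    fun i => hTc (subset_span (Set.mem_range_self i))
  choose B hB using fun i => (mem_span_range_iff_exists_fun ℝ).1 (hrowT i)
  choose A hA using fun k => (mem_span_range_iff_exists_fun ℝ).1 (hcS k)
  refine ⟨Matrix.of B * Matrix.of A, ?_, ?_⟩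
  · calc (Matrix.of B * Matrix.of A).rank ≤ (Matrix.of B).rank := Matrix.rank_mul_le_left _ _
    _ ≤ Fintype.card (Fin r) := Matrix.rank_le_card_width _
    _ = r := Fintype.card_fin r
  · have hAX : ∀ k, le ((Matrix.of A * X) k) = c k := by
      intro k
      rw [row_mul, map_sum]
      simp_rw [_root_.map_smul]
      exact hA k
    have hNX : ∀ i, le ((Matrix.of B * Matrix.of A * X) i) = p (le (M i)) := by
      intro i
      rw [Matrix.mul_assoc, row_mul, map_sum]
      simp_rw [_root_.map_smul, hAX]
      exact hB i
    rw [frob_eq_rows, frob_eq_rows]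
    apply Real.sqrt_le_sqrt
    apply Finset.sum_le_sum
    intro i _
    have e1 : (WithLp.equiv 2 (Fin n → ℝ)).symm ((W * X - Matrix.of B * Matrix.of A * X) i)
        = le ((W * X) i) - p (le (M i)) := by
      show le ((W * X - Matrix.of B * Matrix.of A * X) i) = _
      have : (W * X - Matrix.of B * Matrix.of A * X) i
          = (W * X) i - (Matrix.of B * Matrix.of A * X) i := rfl
      rw [this, map_sub, hNX i]
    have e2 : (WithLp.equiv 2 (Fin n → ℝ)).symm ((W * X - M) i)
        = le ((W * X) i) - le (M i) := by
      show le ((W * X - M) i) = _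
      have : (W * X - M) i = (W * X) i - M i := rfl
      rw [this, map_sub]
    rw [e1, e2]
    have e3 : le ((W * X) i) - p (le (M i)) = p (le ((W * X) i) - le (M i)) := by
      rw [map_sub, hpid _ (hWX i)]
    rw [e3]
    exact pow_le_pow_left₀ (norm_nonneg _) (hpnorm _) 2

private lemma frobNorm_nonneg {m n : ℕ} (Z : Matrix (Fin m) (Fin n) ℝ) : 0 ≤ frobNorm Z :=
  Real.sqrt_nonneg _

/-- step in the proof of Lemma 3: the best rank-`≤ r`
approximation error of `WX` among matrices of the form `W̃X` equals the best
rank-`≤ r` approximation error of `WX` among all matrices. -/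
theorem stmt14 {din dout n : ℕ} (X : Matrix (Fin din) (Fin n) ℝ)
    (W : Matrix (Fin dout) (Fin din) ℝ) (r : ℕ) :
    (⨅ Wt : {Wt : Matrix (Fin dout) (Fin din) ℝ // Wt.rank ≤ r},
        frobNorm (W * X - Wt.1 * X)) =
      ⨅ M : {M : Matrix (Fin dout) (Fin n) ℝ // M.rank ≤ r},
        frobNorm (W * X - M.1) := by
  have hbdd1 : BddBelow (Set.range fun Wt : {Wt : Matrix (Fin dout) (Fin din) ℝ // Wt.rank ≤ r} =>
      frobNorm (W * X - Wt.1 * X)) := ⟨0, by rintro x ⟨y, rfl⟩; exact frobNorm_nonneg _⟩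
  have hbdd2 : BddBelow (Set.range fun M : {M : Matrix (Fin dout) (Fin n) ℝ // M.rank ≤ r} =>
      frobNorm (W * X - M.1)) := ⟨0, by rintro x ⟨y, rfl⟩; exact frobNorm_nonneg _⟩
  have hne1 : Nonempty {Wt : Matrix (Fin dout) (Fin din) ℝ // Wt.rank ≤ r} :=
    ⟨⟨0, by simp [Matrix.rank_zero]⟩⟩
  have hne2 : Nonempty {M : Matrix (Fin dout) (Fin n) ℝ // M.rank ≤ r} :=
    ⟨⟨0, by simp [Matrix.rank_zero]⟩⟩
  apply le_antisymm
  · refine le_ciInf fun M => ?_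
    obtain ⟨Wt, h1, h2⟩ := key X W r M.1 M.2
    exact ciInf_le_of_le hbdd1 ⟨Wt, h1⟩ h2
  · refine le_ciInf fun Wt => ?_
    exact ciInf_le_of_le hbdd2 ⟨Wt.1 * X, (Matrix.rank_mul_le_left _ _).trans Wt.2⟩ le_rfl

end

end CoLA
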